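/- Let t > 0, L > 0 and let κ : [0,L] → [0,∞) be continuous and not constant. Then (1/L)·∫₀^L κ(s)²/(1 + t·κ(s)) ds < F_t( (1/L)·∫₀^L κ(s)² ds ), where F_t(x) = x/(1 + t·√x). -/

import Mathlib

open intervalIntegral

/-- Tangent-line inequality for `F_t(x) = x/(1+t√x)` at `x = b²`, written with `x = a²`. -/
lemma tangent_le (t a b : ℝ) (ht : 0 < t) (ha : 0 ≤ a) (hb : 0 < b) :
    a ^ 2 / (1 + t * a) ≤
      b ^ 2 / (1 + t * b) + (2 + t * b) / (2 * (1 + t * b) ^ 2) * (a ^ 2 - b ^ 2) := by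
  have h1 : 0 < 1 + t * a := by positivity
  have h2 : 0 < 1 + t * b := by positivity
  rw [← sub_nonneg]
  have key : b ^ 2 / (1 + t * b) + (2 + t * b) / (2 * (1 + t * b) ^ 2) * (a ^ 2 - b ^ 2)
      - a ^ 2 / (1 + t * a)
      = t * (a - b) ^ 2 * (2 * a + b + t * a * b) / (2 * (1 + t * a) * (1 + t * b) ^ 2) := by
    field_simp
    ring
  rw [key]
  positivity

lemma tangent_lt (t a b : ℝ) (ht : 0 < t) (ha : 0 ≤ a) (hb : 0 < b) (hab : a ≠ b) :
    a ^ 2 / (1 + t * a) <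
      b ^ 2 / (1 + t * b) + (2 + t * b) / (2 * (1 + t * b) ^ 2) * (a ^ 2 - b ^ 2) := by
  have h1 : 0 < 1 + t * a := by positivity
  have h2 : 0 < 1 + t * b := by positivity
  rw [← sub_pos]
  have key : b ^ 2 / (1 + t * b) + (2 + t * b) / (2 * (1 + t * b) ^ 2) * (a ^ 2 - b ^ 2)
      - a ^ 2 / (1 + t * a)
      = t * (a - b) ^ 2 * (2 * a + b + t * a * b) / (2 * (1 + t * a) * (1 + t * b) ^ 2) := by
    field_simp
    ring
  rw [key]
  apply div_pos
  · have hsq : 0 < (a - b) ^ 2 :=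
      lt_of_le_of_ne (sq_nonneg _) (Ne.symm (pow_ne_zero 2 (sub_ne_zero.mpr hab)))
    have h3 : 0 < 2 * a + b + t * a * b := by positivity
    positivity
  · positivity

/-- Jensen's strict inequality for the strictly concave function
`F_t(x) = x / (1 + t √x)` applied to the square of a nonnegative, continuous,
non-constant function `κ` on `[0, L]`:
`(1/L) ∫₀ᴸ κ²/(1 + tκ) < F_t((1/L) ∫₀ᴸ κ²)`. -/
theorem stmt_2 (t L : ℝ) (ht : 0 < t) (hL : 0 < L) (κ : ℝ → ℝ)
    (hκcont : ContinuousOn κ (Set.Icc 0 L))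
    (hκnonneg : ∀ s ∈ Set.Icc 0 L, 0 ≤ κ s)
    (hκnonconst : ¬ ∃ c : ℝ, ∀ s ∈ Set.Icc 0 L, κ s = c) :
    (1 / L) * ∫ s in (0 : ℝ)..L, (κ s) ^ 2 / (1 + t * κ s) <
      ((1 / L) * ∫ s in (0 : ℝ)..L, (κ s) ^ 2) /
        (1 + t * Real.sqrt ((1 / L) * ∫ s in (0 : ℝ)..L, (κ s) ^ 2)) := by
  push_neg at hκnonconst
  -- continuity of κ²
  have hκ2cont : ContinuousOn (fun s => (κ s) ^ 2) (Set.Icc 0 L) := hκcont.pow 2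
  -- the average m
  set I : ℝ := ∫ s in (0 : ℝ)..L, (κ s) ^ 2 with hI
  have hIpos : 0 < I := by
    obtain ⟨s₀, hs₀, hs₀ne⟩ := hκnonconst 0
    refine intervalIntegral.integral_pos hL hκ2cont (fun x hx => sq_nonneg _) ⟨s₀, hs₀, ?_⟩
    have := (hκnonneg s₀ hs₀).lt_of_ne (Ne.symm hs₀ne)
    positivity
  set m : ℝ := (1 / L) * I with hm
  have hmpos : 0 < m := by positivity
  set b : ℝ := Real.sqrt m with hb
  have hbpos : 0 < b := Real.sqrt_pos.mpr hmpos
  have hb2 : b ^ 2 = m := Real.sq_sqrt hmpos.le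
  set c : ℝ := (2 + t * b) / (2 * (1 + t * b) ^ 2) with hc
  -- the two integrands
  have hgcont : ContinuousOn (fun s => (κ s) ^ 2 / (1 + t * κ s)) (Set.Icc 0 L) := by
    refine hκ2cont.div (continuousOn_const.add (continuousOn_const.mul hκcont)) ?_
    intro s hs
    have := hκnonneg s hs
    positivity
  have hhcont : ContinuousOn (fun s => b ^ 2 / (1 + t * b) + c * ((κ s) ^ 2 - b ^ 2))
      (Set.Icc 0 L) := by
    exact continuousOn_const.add (continuousOn_const.mul (hκ2cont.sub continuousOn_const))
  -- strict inequality point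
  obtain ⟨s₁, hs₁, hs₁ne⟩ := hκnonconst b
  -- strict integral inequality
  have hint : (∫ s in (0 : ℝ)..L, (κ s) ^ 2 / (1 + t * κ s)) <
      ∫ s in (0 : ℝ)..L, (b ^ 2 / (1 + t * b) + c * ((κ s) ^ 2 - b ^ 2)) := by
    refine intervalIntegral.integral_lt_integral_of_continuousOn_of_le_of_exists_lt hL
      hgcont hhcont ?_ ⟨s₁, hs₁, ?_⟩
    · intro x hx
      exact tangent_le t (κ x) b ht (hκnonneg x (Set.Ioc_subset_Icc_self hx)) hbpos
    · exact tangent_lt t (κ s₁) b ht (hκnonneg s₁ hs₁) hbpos hs₁ne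
  -- compute the right integral
  have hκ2int : IntervalIntegrable (fun s => (κ s) ^ 2) MeasureTheory.volume 0 L :=
    hκ2cont.intervalIntegrable_of_Icc hL.le
  have hint2int : IntervalIntegrable (fun s => c * ((κ s) ^ 2 - b ^ 2)) MeasureTheory.volume 0 L :=
    ((hκ2int.sub (intervalIntegrable_const)).const_mul c)
  have hRHS : (∫ s in (0 : ℝ)..L, (b ^ 2 / (1 + t * b) + c * ((κ s) ^ 2 - b ^ 2)))
      = L * (b ^ 2 / (1 + t * b)) := by
    rw [intervalIntegral.integral_add intervalIntegrable_const hint2int,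
      intervalIntegral.integral_const_mul,
      intervalIntegral.integral_sub hκ2int intervalIntegrable_const,
      intervalIntegral.integral_const, intervalIntegral.integral_const]
    have hLm : I - (L - 0) • b ^ 2 = 0 := by
      rw [smul_eq_mul, hb2, hm]; field_simp; ring
    rw [show (∫ (x : ℝ) in (0:ℝ)..L, κ x ^ 2) = I from rfl, hLm, mul_zero, add_zero,
      smul_eq_mul, sub_zero, mul_comm]
  rw [hRHS] at hint
  -- conclude
  rw [← hb2]
  calc (1 / L) * ∫ s in (0 : ℝ)..L, (κ s) ^ 2 / (1 + t * κ s)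
      < (1 / L) * (L * (b ^ 2 / (1 + t * b))) := by
        apply mul_lt_mul_of_pos_left hint
        positivity
    _ = b ^ 2 / (1 + t * b) := by field_simp
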